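/- Let r > 0 and let f be a function holomorphic on an open neighborhood of the closed disc {z ∈ ℂ : |z| ≤ r}, and let g be a continuous function on the closed disc {z : |z| ≤ r} such that |f(z)| > |g(z)| for all z with |z| = r. If there exists z₀ with |z₀| < r and f(z₀) = 0, then there exists z' with |z'| < r such that f(z') = g(z'). -/

import Mathlib

open Metric Set

noncomputable section
namespace RoucheAux

def Complex.abs : AbsoluteValue ℂ ℝ := IsAbsoluteValue.toAbsoluteValue (norm : ℂ → ℝ)

lemma Complex.norm_eq_abs (z : ℂ) : ‖z‖ = Complex.abs z := rfl

lemma Complex.abs_ofReal (x : ℝ) : Complex.abs (x : ℂ) = |x| := by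
  rw [← Complex.norm_eq_abs, _root_.Complex.norm_real, Real.norm_eq_abs]

lemma Complex.abs_exp (z : ℂ) : Complex.abs (_root_.Complex.exp z) = Real.exp z.re :=
  _root_.Complex.norm_exp z

lemma Complex.continuous_abs : Continuous Complex.abs := continuous_norm

lemma Complex.re_le_abs (z : ℂ) : z.re ≤ Complex.abs z := _root_.Complex.re_le_norm z



/-- `e t = exp(2πi t)`, the standard loop. -/
def e (t : ℝ) : ℂ := Complex.exp (2 * Real.pi * Complex.I * t)

lemma continuous_e : Continuous e := by
  exact Complex.continuous_exp.comp (by continuity)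

lemma e_zero : e 0 = 1 := by simp [e]

lemma e_one : e 1 = 1 := by
  simp only [e, Complex.ofReal_one, mul_one]
  exact Complex.exp_two_pi_mul_I

lemma abs_e (t : ℝ) : Complex.abs (e t) = 1 := by
  rw [e, Complex.abs_exp]
  norm_num [Complex.mul_re, Complex.mul_im]

lemma e_ne_zero (t : ℝ) : e t ≠ 0 := Complex.exp_ne_zero _

/-- Winding "number" (times `2πi`) of a loop `γ` on `[0,1]`, via a continuous logarithm. -/
def HasWind (γ : ℝ → ℂ) (w : ℂ) : Prop :=
  ∃ l : ℝ → ℂ, ContinuousOn l (Icc 0 1) ∧ (∀ t ∈ Icc (0:ℝ) 1, Complex.exp (l t) = γ t) ∧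
    l 1 - l 0 = w

lemma near_mem_slitPlane {a b : ℂ} (h : Complex.abs (b - a) < Complex.abs a) :
    a ≠ 0 ∧ b ≠ 0 ∧ b / a ∈ Complex.slitPlane := by
  have ha : a ≠ 0 := by
    intro h0; rw [h0, sub_zero] at h; rw [map_zero] at h
    exact absurd h (Complex.abs.nonneg b).not_gt
  have hb : b ≠ 0 := by
    intro h0
    rw [h0] at h
    rw [zero_sub, Complex.abs.map_neg] at h
    exact absurd h (lt_irrefl _)
  refine ⟨ha, hb, ?_⟩
  rw [Complex.mem_slitPlane_iff]
  left
  have h1 : Complex.abs (1 - b / a) < 1 := by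
    have h3 : 1 - b / a = -((b - a) / a) := by field_simp; ring
    rw [h3, Complex.abs.map_neg, map_div₀ Complex.abs]
    rw [div_lt_one (Complex.abs.pos ha)]
    exact h
  have h2 : (1 - b / a).re ≤ Complex.abs (1 - b / a) := Complex.re_le_abs _
  have : (1 - b / a).re = 1 - (b / a).re := by simp
  linarith

/-- An `ℝ`-valued continuous function on `[0,1]` taking values in `2πℤ` is constant. -/
lemma aux_const {ρ : ℝ → ℝ} (hc : ContinuousOn ρ (Icc 0 1))
    (hv : ∀ t ∈ Icc (0:ℝ) 1, ∃ n : ℤ, ρ t = n * (2 * Real.pi)) :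
    ρ 1 = ρ 0 := by
  by_contra hne
  have h0 : (0:ℝ) ∈ Icc (0:ℝ) 1 := by norm_num
  have h1 : (1:ℝ) ∈ Icc (0:ℝ) 1 := by norm_num
  have hS : IsPreconnected (ρ '' Icc 0 1) := (isPreconnected_Icc).image ρ hc
  have hoc : (ρ '' Icc 0 1).OrdConnected := hS.ordConnected
  obtain ⟨n0, hn0⟩ := hv 0 h0
  obtain ⟨n1, hn1⟩ := hv 1 h1
  have hpi : (0:ℝ) < Real.pi := Real.pi_pos
  -- wlog: let a be the smaller value
  have key : ∀ a b : ℝ, a ∈ ρ '' Icc 0 1 → b ∈ ρ '' Icc 0 1 →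
      (∃ na : ℤ, a = na * (2 * Real.pi)) → (∃ nb : ℤ, b = nb * (2 * Real.pi)) → a < b → False := by
    intro a b ha hb ⟨na, hna⟩ ⟨nb, hnb⟩ hab
    have hgap : a + Real.pi ≤ b := by
      have : na < nb := by
        by_contra hle
        push_neg at hle
        have : nb * (2 * Real.pi) ≤ na * (2 * Real.pi) := by
          apply mul_le_mul_of_nonneg_right _ (by positivity)
          exact_mod_cast hle
        rw [← hna, ← hnb] at this; linarith
      have : (na : ℝ) + 1 ≤ nb := by exact_mod_cast this
      rw [hna, hnb]; nlinarith
    have hmid : a + Real.pi ∈ ρ '' Icc 0 1 := hoc.out ha hb ⟨by linarith, hgap⟩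
    obtain ⟨t, ht, hρt⟩ := hmid
    obtain ⟨nc, hnc⟩ := hv t ht
    rw [hρt] at hnc
    -- a + π = nc * 2π and a = na * 2π ⇒ π = (nc - na) * 2π ⇒ 1 = 2(nc - na)
    have : (1:ℝ) = 2 * ((nc : ℝ) - na) := by
      rw [hna] at hnc
      have := hnc
      field_simp at this ⊢
      nlinarith [this]
    have h2 : (1:ℤ) = 2 * (nc - na) := by exact_mod_cast this
    omega
  rcases lt_or_gt_of_ne hne with h | h
  · exact key _ _ ⟨1, h1, rfl⟩ ⟨0, h0, rfl⟩ ⟨n1, hn1⟩ ⟨n0, hn0⟩ h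
  · exact key _ _ ⟨0, h0, rfl⟩ ⟨1, h1, rfl⟩ ⟨n0, hn0⟩ ⟨n1, hn1⟩ h

lemma HasWind.unique {γ : ℝ → ℂ} {w₁ w₂ : ℂ} (h₁ : HasWind γ w₁) (h₂ : HasWind γ w₂) :
    w₁ = w₂ := by
  obtain ⟨l₁, hl₁c, hl₁e, hl₁w⟩ := h₁
  obtain ⟨l₂, hl₂c, hl₂e, hl₂w⟩ := h₂
  set d : ℝ → ℂ := fun t => l₁ t - l₂ t with hd
  have hint : ∀ t ∈ Icc (0:ℝ) 1, ∃ n : ℤ, d t = n * (2 * Real.pi * Complex.I) := by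
    intro t ht
    have : Complex.exp (d t) = 1 := by
      rw [hd]
      rw [Complex.exp_sub, hl₁e t ht, hl₂e t ht, div_self]
      rw [← hl₁e t ht]; exact Complex.exp_ne_zero _
    exact Complex.exp_eq_one_iff.mp this
  have him : (d 1).im = (d 0).im := by
    apply aux_const (Complex.continuous_im.comp_continuousOn (hl₁c.sub hl₂c))
    intro t ht
    obtain ⟨n, hn⟩ := hint t ht
    refine ⟨n, ?_⟩
    show (d t).im = _
    rw [hn]
    simp [Complex.mul_im, Complex.mul_re]
  have hre : ∀ t ∈ Icc (0:ℝ) 1, (d t).re = 0 := by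
    intro t ht
    obtain ⟨n, hn⟩ := hint t ht
    rw [hn]
    simp [Complex.mul_re]
  have : d 1 = d 0 := by
    apply Complex.ext
    · rw [hre 1 (by norm_num), hre 0 (by norm_num)]
    · exact him
  have : l₁ 1 - l₂ 1 = l₁ 0 - l₂ 0 := this
  rw [← hl₁w, ← hl₂w]
  linear_combination this


lemma exists_hasWind {γ : ℝ → ℂ} (hγ : ContinuousOn γ (Icc 0 1))
    (hne : ∀ t ∈ Icc (0:ℝ) 1, γ t ≠ 0) : ∃ w, HasWind γ w := by
  obtain ⟨t₀, ht₀, hmin⟩ := isCompact_Icc.exists_isMinOn (⟨0, by norm_num⟩ : (Icc (0:ℝ) 1).Nonempty)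
    (Complex.continuous_abs.comp_continuousOn hγ)
  set ε : ℝ := Complex.abs (γ t₀) with hε
  have hεpos : 0 < ε := Complex.abs.pos (hne t₀ ht₀)
  obtain ⟨δ, hδpos, hδ⟩ := Metric.uniformContinuousOn_iff.mp
    (isCompact_Icc.uniformContinuousOn_of_continuous hγ) ε hεpos
  obtain ⟨N, hN⟩ := exists_nat_one_div_lt hδpos
  set M : ℕ := N + 1 with hM
  have hMpos : (0:ℝ) < M := by positivity
  have hstep : (1:ℝ)/M < δ := by exact_mod_cast hN
  have main : ∀ k : ℕ, k ≤ M → ∃ l : ℝ → ℂ, Continuous l ∧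
      ∀ t ∈ Icc (0:ℝ) ((k:ℝ)/M), Complex.exp (l t) = γ t := by
    intro k hk
    induction k with
    | zero =>
      refine ⟨fun _ => Complex.log (γ 0), continuous_const, ?_⟩
      intro t ht
      simp only [Nat.cast_zero, zero_div] at ht
      have : t = 0 := le_antisymm ht.2 ht.1
      rw [this]
      exact Complex.exp_log (hne 0 (by norm_num))
    | succ k ih =>
      obtain ⟨l, hlc, hle⟩ := ih (le_of_lt (Nat.lt_of_succ_le hk))
      simp only [Nat.cast_add, Nat.cast_one]
      set a : ℝ := (k:ℝ)/M with ha
      set b : ℝ := ((k:ℝ)+1)/M with hb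
      have hab : a ≤ b := by rw [ha, hb]; gcongr; linarith
      have ha0 : 0 ≤ a := by positivity
      have hb1 : b ≤ 1 := by
        rw [hb, div_le_one hMpos]
        exact_mod_cast hk
      have ha1 : a ≤ 1 := le_trans hab hb1
      have haI : a ∈ Icc (0:ℝ) 1 := ⟨ha0, ha1⟩
      set c : ℝ → ℝ := fun t => max a (min t b) with hc
      have hcc : Continuous c := continuous_const.max (continuous_id.min continuous_const)
      have hcmem : ∀ t, c t ∈ Icc a b := fun t =>
        ⟨le_max_left _ _, max_le hab (min_le_right _ _)⟩
      have hcI : ∀ t, c t ∈ Icc (0:ℝ) 1 :=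
        fun t => ⟨le_trans ha0 (hcmem t).1, le_trans (hcmem t).2 hb1⟩
      have hclose : ∀ t, Complex.abs (γ (c t) - γ a) < ε := by
        intro t
        have hd : dist (c t) a < δ := by
          rw [Real.dist_eq]
          have h1 := (hcmem t).1
          have h2 := (hcmem t).2
          have hba : b - a = 1/M := by rw [ha, hb, div_sub_div_same]; norm_num
          rw [abs_of_nonneg (by linarith)]
          linarith
        have := hδ (c t) (hcI t) a haI hd
        rwa [Complex.dist_eq] at this
      have hεa : ε ≤ Complex.abs (γ a) := hmin haI
      have hslit : ∀ t, γ a ≠ 0 ∧ γ (c t) ≠ 0 ∧ γ (c t) / γ a ∈ Complex.slitPlane :=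
        fun t => near_mem_slitPlane (lt_of_lt_of_le (hclose t) hεa)
      refine ⟨fun t => if t ≤ a then l t else l a + Complex.log (γ (c t) / γ a), ?_, ?_⟩
      · apply Continuous.if_le hlc ?_ continuous_id continuous_const
        · intro x hx
          have hxa : x = a := hx
          have hca : c a = a := by
            rw [hc]
            simp only [min_eq_left hab, max_self]
          rw [hxa, hca, div_self (hslit a).1, Complex.log_one, add_zero]
        · apply continuous_const.add
          apply Continuous.clog
          · exact (hγ.comp_continuous (by fun_prop) hcI).div_const _
          · exact fun t => (hslit t).2.2
      · intro t ht
        by_cases htc : t ≤ a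
        · simp only [if_pos htc]
          exact hle t ⟨ht.1, htc⟩
        · simp only [if_neg htc]
          push_neg at htc
          have hct : c t = t := by
            show max a (min t b) = t
            rw [min_eq_left ht.2, max_eq_right (le_of_lt htc)]
          have hexpa : Complex.exp (l a) = γ a := hle a ⟨ha0, le_refl a⟩
          have htI : t ∈ Icc (0:ℝ) 1 := ⟨le_trans ha0 (le_of_lt htc), le_trans ht.2 hb1⟩
          rw [Complex.exp_add, hexpa, hct, Complex.exp_log ?hq]
          · rw [mul_comm, div_mul_cancel₀ _ (hslit t).1]
          case hq =>
            exact div_ne_zero (hne t htI) (hslit t).1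
  obtain ⟨l, hlc, hle⟩ := main M (le_refl M)
  rw [div_self (ne_of_gt hMpos)] at hle
  exact ⟨l 1 - l 0, l, hlc.continuousOn, hle, rfl⟩


/-- Uniformly close loops have equal winding. -/
lemma HasWind.of_close {γ₁ γ₂ : ℝ → ℂ} {w : ℂ} (h : HasWind γ₁ w)
    (hγ₂ : ContinuousOn γ₂ (Icc 0 1))
    (hloop₁ : γ₁ 1 = γ₁ 0) (hloop₂ : γ₂ 1 = γ₂ 0)
    (hclose : ∀ t ∈ Icc (0:ℝ) 1, Complex.abs (γ₂ t - γ₁ t) < Complex.abs (γ₁ t)) :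
    HasWind γ₂ w := by
  obtain ⟨l, hlc, hle, hlw⟩ := h
  have hγ₁ : ContinuousOn γ₁ (Icc 0 1) := by
    intro t ht
    have := (Complex.continuous_exp.comp_continuousOn hlc) t ht
    apply ContinuousWithinAt.congr this (fun s hs => (hle s hs).symm) (hle t ht).symm
  have hslit := fun t ht => near_mem_slitPlane (hclose t ht)
  refine ⟨fun t => l t + Complex.log (γ₂ t / γ₁ t), ?_, ?_, ?_⟩
  · apply hlc.add
    apply ContinuousOn.clog (hγ₂.div hγ₁ (fun t ht => (hslit t ht).1))
    exact fun t ht => (hslit t ht).2.2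
  · intro t ht
    rw [Complex.exp_add, hle t ht, Complex.exp_log
      (div_ne_zero (hslit t ht).2.1 (hslit t ht).1)]
    rw [mul_comm, div_mul_cancel₀ _ (hslit t ht).1]
  · have h10 : γ₂ 1 / γ₁ 1 = γ₂ 0 / γ₁ 0 := by rw [hloop₁, hloop₂]
    show l 1 + Complex.log (γ₂ 1 / γ₁ 1) - (l 0 + Complex.log (γ₂ 0 / γ₁ 0)) = w
    rw [h10, ← hlw]; ring

lemma hasWind_const {c : ℂ} (hc : c ≠ 0) : HasWind (fun _ => c) 0 :=
  ⟨fun _ => Complex.log c, continuousOn_const, fun t _ => Complex.exp_log hc, by ring⟩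

lemma HasWind.mul {γ₁ γ₂ : ℝ → ℂ} {w₁ w₂ : ℂ} (h₁ : HasWind γ₁ w₁) (h₂ : HasWind γ₂ w₂) :
    HasWind (fun t => γ₁ t * γ₂ t) (w₁ + w₂) := by
  obtain ⟨l₁, hc₁, he₁, hw₁⟩ := h₁
  obtain ⟨l₂, hc₂, he₂, hw₂⟩ := h₂
  refine ⟨fun t => l₁ t + l₂ t, hc₁.add hc₂, fun t ht => ?_, ?_⟩
  · rw [Complex.exp_add, he₁ t ht, he₂ t ht]
  · rw [← hw₁, ← hw₂]; ring

lemma HasWind.pow {γ : ℝ → ℂ} {w : ℂ} (h : HasWind γ w) (m : ℕ) :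
    HasWind (fun t => (γ t) ^ m) (m * w) := by
  induction m with
  | zero => simpa using hasWind_const one_ne_zero
  | succ m ih =>
    have := ih.mul h
    simp only [← pow_succ] at this
    convert this using 1
    push_cast; ring

/-- Winding of the loop `t ↦ r e(t) - a` for `|a| < r` is `2πi`. -/
lemma hasWind_linear {r : ℝ} {a : ℂ} (hr : 0 < r) (ha : Complex.abs a < r) :
    HasWind (fun t => r * e t - a) (2 * Real.pi * Complex.I) := by
  have hre : ∀ t : ℝ, (1 - a / r * Complex.exp (-(2 * Real.pi * Complex.I * t))) ∈
      Complex.slitPlane ∧ (1 - a / r * Complex.exp (-(2 * Real.pi * Complex.I * t))) ≠ 0 := by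
    intro t
    have habs : Complex.abs (a / r * Complex.exp (-(2 * Real.pi * Complex.I * t))) < 1 := by
      rw [map_mul, map_div₀]
      have h1 : Complex.abs (Complex.exp (-(2 * Real.pi * Complex.I * t))) = 1 := by
        rw [Complex.abs_exp]
        norm_num [Complex.mul_re, Complex.mul_im]
      rw [h1, mul_one, Complex.abs_ofReal, abs_of_pos hr, div_lt_one hr]
      exact ha
    have h2 := near_mem_slitPlane (a := 1)
      (b := 1 - a / r * Complex.exp (-(2 * Real.pi * Complex.I * t))) (by
        simpa using habs)
    exact ⟨by simpa using h2.2.2, h2.2.1⟩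
  refine ⟨fun t => Complex.log r + 2 * Real.pi * Complex.I * t +
      Complex.log (1 - a / r * Complex.exp (-(2 * Real.pi * Complex.I * t))), ?_, ?_, ?_⟩
  · apply ContinuousOn.add
    · exact (continuous_const.add (continuous_const.mul Complex.continuous_ofReal)).continuousOn
    · apply Continuous.continuousOn
      apply Continuous.clog
      · continuity
      · exact fun t => (hre t).1
  · intro t _
    rw [Complex.exp_add, Complex.exp_add, Complex.exp_log (by
      exact_mod_cast ne_of_gt hr), Complex.exp_log (hre t).2]
    simp only [e]
    have hrne : (r:ℂ) ≠ 0 := by exact_mod_cast ne_of_gt hr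
    have hexpne : Complex.exp (2 * Real.pi * Complex.I * t) ≠ 0 := Complex.exp_ne_zero _
    field_simp [Complex.exp_neg]
    have hEE : Complex.exp (2 * Real.pi * Complex.I * t) *
        Complex.exp (-(2 * Real.pi * Complex.I * t)) = 1 := by
      rw [← Complex.exp_add, add_neg_cancel, Complex.exp_zero]
    linear_combination (-a) * hEE
  · simp only [Complex.ofReal_one, Complex.ofReal_zero, mul_one, mul_zero, neg_zero,
      Complex.exp_zero]
    rw [Complex.exp_neg, Complex.exp_two_pi_mul_I, inv_one, mul_one]
    ring

set_option maxHeartbeats 1000000 in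
/-- Homotopy invariance of winding along a continuous homotopy through loops. -/
lemma HasWind.of_homotopy {H : ℝ → ℝ → ℂ} {w : ℂ}
    (hH : ContinuousOn (fun p : ℝ × ℝ => H p.1 p.2) (Icc 0 1 ×ˢ Icc 0 1))
    (hne : ∀ p ∈ Icc (0:ℝ) 1 ×ˢ Icc (0:ℝ) 1, H p.1 p.2 ≠ 0)
    (hloop : ∀ s ∈ Icc (0:ℝ) 1, H s 1 = H s 0)
    (h0 : HasWind (H 0) w) : HasWind (H 1) w := by
  have hsq : IsCompact (Icc (0:ℝ) 1 ×ˢ Icc (0:ℝ) 1) := isCompact_Icc.prod isCompact_Icc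
  obtain ⟨p₀, hp₀, hmin⟩ := hsq.exists_isMinOn
    (⟨(0,0), by norm_num⟩ : (Icc (0:ℝ) 1 ×ˢ Icc (0:ℝ) 1).Nonempty)
    (Complex.continuous_abs.comp_continuousOn hH)
  set ε : ℝ := Complex.abs (H p₀.1 p₀.2) with hε
  have hεpos : 0 < ε := Complex.abs.pos (hne p₀ hp₀)
  obtain ⟨δ, hδpos, hδ⟩ := Metric.uniformContinuousOn_iff.mp
    (hsq.uniformContinuousOn_of_continuous hH) ε hεpos
  obtain ⟨N, hN⟩ := exists_nat_one_div_lt hδpos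
  set M : ℕ := N + 1 with hM
  have hMpos : (0:ℝ) < M := by positivity
  have hstep : (1:ℝ)/M < δ := by exact_mod_cast hN
  have hsliceC : ∀ s ∈ Icc (0:ℝ) 1, ContinuousOn (H s) (Icc 0 1) := by
    intro s hs
    have : ContinuousOn (fun t : ℝ => (fun p : ℝ × ℝ => H p.1 p.2) (s, t)) (Icc 0 1) :=
      hH.comp (Continuous.continuousOn (continuous_const.prodMk continuous_id)) (fun t ht => mk_mem_prod hs ht)
    exact this
  have main : ∀ k : ℕ, k ≤ M → HasWind (H ((k:ℝ)/M)) w := by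
    intro k hk
    induction k with
    | zero => simpa using h0
    | succ k ih =>
      have hk' : k ≤ M := le_of_lt (Nat.lt_of_succ_le hk)
      have prev := ih hk'
      set s₁ : ℝ := (k:ℝ)/M with hs₁
      set s₂ : ℝ := ((k:ℝ)+1)/M with hs₂
      have hs₁I : s₁ ∈ Icc (0:ℝ) 1 := by
        constructor
        · positivity
        · rw [hs₁, div_le_one hMpos]; exact_mod_cast hk'
      have hs₂I : s₂ ∈ Icc (0:ℝ) 1 := by
        constructor
        · positivity
        · rw [hs₂, div_le_one hMpos]; exact_mod_cast hk
      have hcast : ((k+1 : ℕ):ℝ)/M = s₂ := by rw [hs₂]; push_cast; ring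
      rw [hcast]
      apply prev.of_close (hsliceC s₂ hs₂I) (hloop s₁ hs₁I) (hloop s₂ hs₂I)
      intro t ht
      have hd : dist ((s₂, t) : ℝ × ℝ) (s₁, t) < δ := by
        rw [Prod.dist_eq]
        simp only [dist_self]
        have hds : s₂ - s₁ = 1/M := by
          rw [hs₁, hs₂, div_sub_div_same]; ring_nf
        rw [Real.dist_eq, hds, abs_of_pos (by positivity), max_eq_left (by positivity)]
        exact hstep
      have hcl := hδ (s₂, t) (mk_mem_prod hs₂I ht) (s₁, t) (mk_mem_prod hs₁I ht) hd
      have hεle : ε ≤ Complex.abs (H s₁ t) := hmin (mk_mem_prod hs₁I ht)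
      rw [Complex.dist_eq] at hcl
      exact lt_of_lt_of_le hcl hεle
  have := main M (le_refl M)
  rwa [div_self (ne_of_gt hMpos)] at this

/-- A continuous nonvanishing function on the closed ball has boundary loop of winding 0. -/
lemma hasWind_zero_of_nonvanishing {F : ℂ → ℂ} {r : ℝ} (hr : 0 < r)
    (hF : ContinuousOn F (closedBall 0 r)) (hne : ∀ z ∈ closedBall (0:ℂ) r, F z ≠ 0) :
    HasWind (fun t => F (r * e t)) 0 := by
  set H : ℝ → ℝ → ℂ := fun s t => F ((s:ℂ) * (r * e t)) with hH
  have hmaps : ∀ p : ℝ × ℝ, p ∈ Icc (0:ℝ) 1 ×ˢ Icc (0:ℝ) 1 →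
      ((p.1:ℂ) * (r * e p.2)) ∈ closedBall (0:ℂ) r := by
    intro p hp
    rw [mem_closedBall_zero_iff]
    rw [Complex.norm_eq_abs, map_mul, map_mul, abs_e, Complex.abs_ofReal, Complex.abs_ofReal,
      mul_one, abs_of_nonneg hp.1.1, abs_of_pos hr]
    calc p.1 * r ≤ 1 * r := by
          apply mul_le_mul_of_nonneg_right hp.1.2 (le_of_lt hr)
      _ = r := one_mul r
  have hHc : ContinuousOn (fun p : ℝ × ℝ => H p.1 p.2) (Icc 0 1 ×ˢ Icc 0 1) := by
    apply hF.comp (Continuous.continuousOn ?_) hmaps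
    exact ((Complex.continuous_ofReal.comp continuous_fst).mul
      (continuous_const.mul (continuous_e.comp continuous_snd)))
  have hHne : ∀ p ∈ Icc (0:ℝ) 1 ×ˢ Icc (0:ℝ) 1, H p.1 p.2 ≠ 0 :=
    fun p hp => hne _ (hmaps p hp)
  have hloop : ∀ s ∈ Icc (0:ℝ) 1, H s 1 = H s 0 := by
    intro s _
    rw [hH]
    simp only [e_one, e_zero]
  have h0 : HasWind (H 0) 0 := by
    have hc0 : (fun t : ℝ => H 0 t) = fun _ => F 0 := by
      funext t
      rw [hH]
      norm_num
    rw [show H (0:ℝ) = fun t => H 0 t from rfl, hc0]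
    exact hasWind_const (hne 0 (mem_closedBall_self (le_of_lt hr)))
  have := HasWind.of_homotopy hHc hHne hloop h0
  have h1 : H 1 = fun t => F (r * e t) := by
    funext t
    rw [hH]
    norm_num
  rwa [h1] at this

/-- Zeros of a non-trivial analytic function in a compact disc are finite. -/
lemma zeros_finite {f : ℂ → ℂ} {r R : ℝ} (hr : 0 ≤ r) (hrR : r < R)
    (hf : AnalyticOnNhd ℂ f (ball (0:ℂ) R))
    (hnz : ∃ z ∈ ball (0:ℂ) R, f z ≠ 0) :
    {z ∈ closedBall (0:ℂ) r | f z = 0}.Finite := by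
  have hRpos : 0 < R := lt_of_le_of_lt hr hrR
  have hsub : closedBall (0:ℂ) r ⊆ ball 0 R := closedBall_subset_ball hrR
  set Z := {z ∈ closedBall (0:ℂ) r | f z = 0} with hZ
  -- f is not locally zero anywhere in the big ball
  have hnl : ∀ z ∈ ball (0:ℂ) R, ¬ (∀ᶠ w in nhds z, f w = 0) := by
    intro z hz hev
    obtain ⟨z', hz', hfz'⟩ := hnz
    have hfreq : ∃ᶠ w in nhdsWithin z {z}ᶜ, f w = 0 :=
      (hev.filter_mono nhdsWithin_le_nhds).frequently
    have := hf.eqOn_zero_of_preconnected_of_frequently_eq_zero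
      (convex_ball (0:ℂ) R).isPreconnected hz hfreq hz'
    exact hfz' this
  have hiso : ∀ z ∈ Z, ∀ᶠ w in nhdsWithin z {z}ᶜ, f w ≠ 0 := by
    intro z hz
    rcases (hf z (hsub hz.1)).eventually_eq_zero_or_eventually_ne_zero with h | h
    · exact absurd h (hnl z (hsub hz.1))
    · exact h
  -- Z is compact
  have hZc : IsCompact Z := by
    set r' : ℝ := (r + R)/2 with hr'
    have hrr' : r < r' := by rw [hr']; linarith
    have hr'R : r' < R := by rw [hr']; linarith
    have hcont : ContinuousOn f (closedBall (0:ℂ) r') :=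
      (hf.mono (closedBall_subset_ball hr'R)).continuousOn
    have hclosed : IsClosed (closedBall (0:ℂ) r' ∩ f ⁻¹' {0}) :=
      hcont.preimage_isClosed_of_isClosed Metric.isClosed_closedBall isClosed_singleton
    have hZeq : Z = closedBall (0:ℂ) r ∩ (closedBall (0:ℂ) r' ∩ f ⁻¹' {0}) := by
      ext z
      constructor
      · rintro ⟨h1, h2⟩
        exact ⟨h1, closedBall_subset_closedBall (le_of_lt hrr') h1, h2⟩
      · rintro ⟨h1, _, h3⟩
        exact ⟨h1, h3⟩
    rw [hZeq]
    exact (isCompact_closedBall _ _).inter_right hclosed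
  -- Z is discrete
  have hdisc : DiscreteTopology ↑Z := by
    rw [discreteTopology_subtype_iff]
    intro x hx
    rw [← Filter.empty_mem_iff_bot]
    have h1 : {w : ℂ | f w ≠ 0} ∈ nhdsWithin x {x}ᶜ := hiso x hx
    have h2 : Z ∈ Filter.principal Z := Filter.mem_principal_self Z
    have h3 := Filter.inter_mem_inf h1 h2
    have : {w : ℂ | f w ≠ 0} ∩ Z = ∅ := by
      ext w
      simp only [mem_inter_iff, mem_setOf_eq, mem_empty_iff_false, iff_false, not_and]
      intro hw hwZ
      exact hw hwZ.2
    rwa [this] at h3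
  exact hZc.finite (isDiscrete_iff_discreteTopology.mpr hdisc)

/-- Factor out the full multiplicity of a zero. -/
lemma factor_zero {f : ℂ → ℂ} {R : ℝ} {z₁ : ℂ}
    (hf : AnalyticOnNhd ℂ f (ball (0:ℂ) R)) (hz₁ : z₁ ∈ ball (0:ℂ) R) (hfz₁ : f z₁ = 0)
    (hnz : ∃ z ∈ ball (0:ℂ) R, f z ≠ 0) :
    ∃ (m : ℕ) (q : ℂ → ℂ), 0 < m ∧ AnalyticOnNhd ℂ q (ball (0:ℂ) R) ∧ q z₁ ≠ 0 ∧
      ∀ z ∈ ball (0:ℂ) R, f z = (z - z₁)^m * q z := by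
  have ha : AnalyticAt ℂ f z₁ := hf z₁ hz₁
  have hord : analyticOrderAt f z₁ ≠ ⊤ := by
    intro htop
    obtain ⟨z', hz', hfz'⟩ := hnz
    have hev : ∀ᶠ w in nhds z₁, f w = 0 := analyticOrderAt_eq_top.mp htop
    have hfreq : ∃ᶠ w in nhdsWithin z₁ {z₁}ᶜ, f w = 0 :=
      (hev.filter_mono nhdsWithin_le_nhds).frequently
    exact hfz' (hf.eqOn_zero_of_preconnected_of_frequently_eq_zero
      (convex_ball (0:ℂ) R).isPreconnected hz₁ hfreq hz')
  set m : ℕ := (analyticOrderAt f z₁).toNat with hm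
  have horder : analyticOrderAt f z₁ = m := (ENat.natCast_toNat hord).symm
  obtain ⟨g, hg, hgz₁, hev⟩ := (ha.analyticOrderAt_eq_natCast (n := m)).mp horder
  have hmpos : 0 < m := by
    rcases Nat.eq_zero_or_pos m with h0 | h
    · exfalso
      have := hev.self_of_nhds
      rw [h0, pow_zero, one_smul, hfz₁] at this
      exact hgz₁ this.symm
    · exact h
  set q : ℂ → ℂ := fun z => if z = z₁ then g z₁ else f z / (z - z₁)^m with hq
  refine ⟨m, q, hmpos, ?_, ?_, ?_⟩
  · intro z hz
    by_cases hzz : z = z₁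
    · subst hzz
      have hqg : g =ᶠ[nhds z] q := by
        filter_upwards [hev] with w hw
        by_cases hwz : w = z
        · subst hwz
          simp [hq]
        · rw [hq]
          simp only [if_neg hwz]
          rw [hw, smul_eq_mul, mul_comm, mul_div_assoc,
            div_self (pow_ne_zero _ (sub_ne_zero.mpr hwz)), mul_one]
      exact hg.congr hqg
    · have hne : AnalyticAt ℂ (fun w => f w / (w - z₁)^m) z := by
        apply (hf z hz).div
        · exact (((analyticAt_id).sub analyticAt_const).pow m)
        · exact pow_ne_zero _ (sub_ne_zero.mpr hzz)
      apply hne.congr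
      filter_upwards [eventually_ne_nhds hzz] with w hw
      rw [hq]
      simp only [if_neg hw]
  · rw [hq]
    simp only [if_pos rfl]
    exact hgz₁
  · intro z hz
    by_cases hzz : z = z₁
    · subst hzz
      rw [hfz₁, sub_self, zero_pow hmpos.ne', zero_mul]
    · rw [hq]
      simp only [if_neg hzz]
      rw [mul_comm, div_mul_cancel₀ _ (pow_ne_zero _ (sub_ne_zero.mpr hzz))]


/-- Main induction: winding of an analytic function's boundary loop counts zeros. -/
lemma analytic_wind {R r : ℝ} (hr : 0 < r) (hrR : r < R) :
    ∀ (n : ℕ) (f : ℂ → ℂ), AnalyticOnNhd ℂ f (ball (0:ℂ) R) →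
    (∀ z ∈ sphere (0:ℂ) r, f z ≠ 0) →
    {z ∈ closedBall (0:ℂ) r | f z = 0}.Finite →
    {z ∈ closedBall (0:ℂ) r | f z = 0}.ncard ≤ n →
    ∃ k : ℕ, HasWind (fun t => f ((r:ℂ) * e t)) (2 * Real.pi * Complex.I * k) ∧
      ((∃ z ∈ ball (0:ℂ) r, f z = 0) → 0 < k) := by
  intro n
  induction n with
  | zero =>
    intro f hf hsph hfin hcard
    by_cases hzero : ∃ z ∈ ball (0:ℂ) r, f z = 0
    · exfalso
      obtain ⟨z₁, hz₁, hfz₁⟩ := hzero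
      have hz₁Z : z₁ ∈ {z ∈ closedBall (0:ℂ) r | f z = 0} :=
        ⟨ball_subset_closedBall hz₁, hfz₁⟩
      have : 0 < {z ∈ closedBall (0:ℂ) r | f z = 0}.ncard :=
        (Set.ncard_pos hfin).mpr ⟨z₁, hz₁Z⟩
      omega
    · refine ⟨0, ?_, fun h => absurd h hzero⟩
      rw [Nat.cast_zero, mul_zero]
      apply hasWind_zero_of_nonvanishing hr
        ((hf.mono (closedBall_subset_ball hrR)).continuousOn)
      intro z hz
      rw [mem_closedBall_zero_iff] at hz
      rcases lt_or_eq_of_le hz with hlt | heq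
      · intro hfz
        exact hzero ⟨z, mem_ball_zero_iff.mpr hlt, hfz⟩
      · exact hsph z (by rwa [mem_sphere_zero_iff_norm])
  | succ n ih =>
    intro f hf hsph hfin hcard
    by_cases hzero : ∃ z ∈ ball (0:ℂ) r, f z = 0
    · obtain ⟨z₁, hz₁, hfz₁⟩ := hzero
      have hz₁R : z₁ ∈ ball (0:ℂ) R := ball_subset_ball (le_of_lt hrR) hz₁
      have hz₁abs : Complex.abs z₁ < r := by
        rw [← Complex.norm_eq_abs, ← mem_ball_zero_iff]; exact hz₁
      have hrmem : (r:ℂ) ∈ sphere (0:ℂ) r := by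
        rw [mem_sphere_zero_iff_norm, Complex.norm_eq_abs, Complex.abs_ofReal, abs_of_pos hr]
      have hrR' : (r:ℂ) ∈ ball (0:ℂ) R := by
        rw [mem_ball_zero_iff, Complex.norm_eq_abs, Complex.abs_ofReal, abs_of_pos hr]
        exact hrR
      have hnz : ∃ z ∈ ball (0:ℂ) R, f z ≠ 0 := ⟨(r:ℂ), hrR', hsph _ hrmem⟩
      obtain ⟨m, q, hm, hqa, hqz₁, hfac⟩ := factor_zero hf hz₁R hfz₁ hnz
      -- zero sets
      set Zf := {z ∈ closedBall (0:ℂ) r | f z = 0} with hZf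
      set Zq := {z ∈ closedBall (0:ℂ) r | q z = 0} with hZq
      have hmemR : ∀ z ∈ closedBall (0:ℂ) r, z ∈ ball (0:ℂ) R :=
        fun z hz => closedBall_subset_ball hrR hz
      have hZeq : Zq = Zf \ {z₁} := by
        ext z
        constructor
        · rintro ⟨hz, hqz⟩
          have hzne : z ≠ z₁ := fun h => hqz₁ (h ▸ hqz)
          refine ⟨⟨hz, ?_⟩, hzne⟩
          rw [hfac z (hmemR z hz), hqz, mul_zero]
        · rintro ⟨⟨hz, hfz⟩, hzne⟩
          refine ⟨hz, ?_⟩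
          have := hfac z (hmemR z hz)
          rw [hfz] at this
          rcases mul_eq_zero.mp this.symm with h | h
          · exact absurd h (pow_ne_zero _ (sub_ne_zero.mpr (Set.mem_singleton_iff.not.mp hzne)))
          · exact h
      have hz₁Zf : z₁ ∈ Zf := ⟨ball_subset_closedBall hz₁, hfz₁⟩
      have hfinq : Zq.Finite := by rw [hZeq]; exact hfin.diff
      have hcardq : Zq.ncard ≤ n := by
        rw [hZeq, Set.ncard_diff_singleton_of_mem hz₁Zf]
        have : 0 < Zf.ncard := (Set.ncard_pos hfin).mpr ⟨z₁, hz₁Zf⟩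
        omega
      have hsphq : ∀ z ∈ sphere (0:ℂ) r, q z ≠ 0 := by
        intro z hz hqz
        apply hsph z hz
        rw [hfac z (hmemR z (sphere_subset_closedBall hz)), hqz, mul_zero]
      obtain ⟨k', hwq, _⟩ := ih q hqa hsphq hfinq hcardq
      refine ⟨m + k', ?_, fun _ => by omega⟩
      have heq : (fun t => f ((r:ℂ) * e t)) =
          fun t => ((r:ℂ) * e t - z₁)^m * q ((r:ℂ) * e t) := by
        funext t
        apply hfac
        rw [mem_ball_zero_iff, Complex.norm_eq_abs, map_mul, abs_e, Complex.abs_ofReal,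
          abs_of_pos hr, mul_one]
        exact hrR
      rw [heq]
      have := ((hasWind_linear hr hz₁abs).pow m).mul hwq
      convert this using 1
      push_cast
      ring
    · refine ⟨0, ?_, fun h => absurd h hzero⟩
      rw [Nat.cast_zero, mul_zero]
      apply hasWind_zero_of_nonvanishing hr
        ((hf.mono (closedBall_subset_ball hrR)).continuousOn)
      intro z hz
      rw [mem_closedBall_zero_iff] at hz
      rcases lt_or_eq_of_le hz with hlt | heq
      · intro hfz
        exact hzero ⟨z, mem_ball_zero_iff.mpr hlt, hfz⟩
      · exact hsph z (by rwa [mem_sphere_zero_iff_norm])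

end RoucheAux

open RoucheAux in
set_option maxHeartbeats 1000000 in
/-- Rouché-type theorem where only one function is analytic: if `f` is holomorphic on a
neighborhood of the closed disc of radius `r`, `g` is continuous on the closed disc,
`|f| > |g|` on the boundary circle, and `f` has a zero in the open disc, then `f` and `g`
coincide somewhere in the open disc. -/
theorem rouche_type_analytic_continuous
    (r : ℝ) (hr : 0 < r) (f g : ℂ → ℂ)
    (U : Set ℂ) (hU : IsOpen U) (hUr : closedBall (0 : ℂ) r ⊆ U)
    (hf : DifferentiableOn ℂ f U)
    (hg : ContinuousOn g (closedBall (0 : ℂ) r))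
    (hfg : ∀ z : ℂ, ‖z‖ = r → ‖g z‖ < ‖f z‖)
    (z₀ : ℂ) (hz₀ : ‖z₀‖ < r) (hfz₀ : f z₀ = 0) :
    ∃ z' : ℂ, ‖z'‖ < r ∧ f z' = g z' := by
  by_contra hcon
  push_neg at hcon
  -- enlarge the disc inside U
  obtain ⟨δ, hδpos, hδsub⟩ := (isCompact_closedBall (0:ℂ) r).exists_cthickening_subset_open hU hUr
  set R : ℝ := δ + r with hR
  have hrR : r < R := by rw [hR]; linarith
  have hRsub : ball (0:ℂ) R ⊆ U := by
    intro z hz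
    apply hδsub
    rw [cthickening_closedBall (le_of_lt hδpos) (le_of_lt hr)]
    exact ball_subset_closedBall hz
  have hfa : AnalyticOnNhd ℂ f (ball (0:ℂ) R) :=
    (hf.mono hRsub).analyticOnNhd isOpen_ball
  -- the sphere condition for f
  have hsphne : ∀ z ∈ sphere (0:ℂ) r, f z ≠ 0 := by
    intro z hz hfz
    rw [mem_sphere_zero_iff_norm, Complex.norm_eq_abs] at hz
    have := hfg z hz
    rw [hfz] at this
    simp only [norm_zero] at this
    exact absurd this (Complex.abs.nonneg _).not_gt
  -- h = f - g is continuous and nonvanishing on the closed disc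
  set h : ℂ → ℂ := fun z => f z - g z with hh
  have hconth : ContinuousOn h (closedBall (0:ℂ) r) :=
    ((hfa.continuousOn).mono (closedBall_subset_ball hrR)).sub hg
  have hneh : ∀ z ∈ closedBall (0:ℂ) r, h z ≠ 0 := by
    intro z hz
    rw [mem_closedBall_zero_iff, Complex.norm_eq_abs] at hz
    rcases lt_or_eq_of_le hz with hlt | heq
    · exact sub_ne_zero.mpr (hcon z hlt)
    · intro h0
      have hfeq : f z = g z := sub_eq_zero.mp h0
      have := hfg z heq
      rw [hfeq] at this
      exact absurd this (lt_irrefl _)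
  -- winding of h's boundary loop is zero
  have hwh : HasWind (fun t => h ((r:ℂ) * e t)) 0 :=
    hasWind_zero_of_nonvanishing hr hconth hneh
  -- winding of f's boundary loop is 2πi k with k ≥ 1
  have hfin : {z ∈ closedBall (0:ℂ) r | f z = 0}.Finite := by
    apply zeros_finite (le_of_lt hr) hrR hfa
    refine ⟨(r:ℂ), ?_, ?_⟩
    · rw [mem_ball_zero_iff, Complex.norm_eq_abs, Complex.abs_ofReal, abs_of_pos hr]
      exact hrR
    · apply hsphne
      rw [mem_sphere_zero_iff_norm, Complex.norm_eq_abs, Complex.abs_ofReal, abs_of_pos hr]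
  obtain ⟨k, hwf, hkpos⟩ := analytic_wind hr hrR _ f hfa hsphne hfin (le_refl _)
  have hk : 0 < k := by
    apply hkpos
    refine ⟨z₀, ?_, hfz₀⟩
    rw [mem_ball_zero_iff, Complex.norm_eq_abs]
    exact hz₀
  -- the two loops are uniformly close, so their windings agree
  have habs_re : ∀ t : ℝ, Complex.abs ((r:ℂ) * e t) = r := by
    intro t
    rw [map_mul, abs_e, Complex.abs_ofReal, abs_of_pos hr, mul_one]
  have hmapsphere : ∀ t : ℝ, ((r:ℂ) * e t) ∈ closedBall (0:ℂ) r := by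
    intro t
    rw [mem_closedBall_zero_iff, Complex.norm_eq_abs, habs_re t]
  have hwh' : HasWind (fun t => h ((r:ℂ) * e t)) (2 * Real.pi * Complex.I * k) := by
    apply hwf.of_close
    · exact hconth.comp (continuous_const.mul continuous_e).continuousOn
        (fun t _ => hmapsphere t)
    · show f ((r:ℂ) * e 1) = f ((r:ℂ) * e 0)
      rw [e_one, e_zero]
    · show h ((r:ℂ) * e 1) = h ((r:ℂ) * e 0)
      rw [e_one, e_zero]
    · intro t _
      have : h ((r:ℂ) * e t) - f ((r:ℂ) * e t) = -(g ((r:ℂ) * e t)) := by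
        rw [hh]; ring
      rw [this, Complex.abs.map_neg]
      exact hfg _ (habs_re t)
  have h0 : (2 * Real.pi * Complex.I : ℂ) * k = 0 := (hwh.unique hwh').symm
  rcases mul_eq_zero.mp h0 with h1 | h1
  · rcases mul_eq_zero.mp h1 with h2 | h2
    · norm_num at h2
    · exact Complex.I_ne_zero h2
  · have hk0 : k = 0 := Nat.cast_eq_zero.mp h1
    omega
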